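/- The function v(t,x,y) := x + √(T-t) · ψ((y-x)/√(T-t)) for t < T and x ≤ y, where ψ(z) = z(2Φ(z)-1) + (2/√(2π))e^{-z²/2}, satisfies the heat equation ∂_t v + (1/2) ∂²_{xx} v = 0 on {(t,x,y) : t < T, x < y}, and moreover ∂_y v(t,x,x) = 0. -/

import Mathlib

/-- The standard normal cdf, as an integral of the Gaussian density. -/
noncomputable def stdNormalCdf (z : ℝ) : ℝ :=
  ∫ x in Set.Iic z, Real.exp (-x ^ 2 / 2) / Real.sqrt (2 * Real.pi)

/-- ψ(z) = z(2Φ(z) - 1) + (2/√(2π)) e^{-z²/2}. -/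
noncomputable def psi (z : ℝ) : ℝ :=
  z * (2 * stdNormalCdf z - 1) + (2 / Real.sqrt (2 * Real.pi)) * Real.exp (-z ^ 2 / 2)

/-- v(t,x,y) = x + √(T-t) ψ((y-x)/√(T-t)). -/
noncomputable def vFun (T t x y : ℝ) : ℝ :=
  x + Real.sqrt (T - t) * psi ((y - x) / Real.sqrt (T - t))

open MeasureTheory Real Set

noncomputable def gauss (z : ℝ) : ℝ := Real.exp (-z ^ 2 / 2) / Real.sqrt (2 * Real.pi)

lemma gauss_integrable : Integrable gauss := by
  have h := integrable_exp_neg_mul_sq (by norm_num : (0:ℝ) < 1/2)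
  have h2 := h.div_const (Real.sqrt (2 * Real.pi))
  refine h2.congr ?_
  filter_upwards with z
  simp [gauss]
  ring_nf

lemma gauss_total : ∫ z : ℝ, gauss z = 1 := by
  have h : ∫ x : ℝ, Real.exp (-(1/2) * x ^ 2) = Real.sqrt (Real.pi / (1/2)) :=
    integral_gaussian (1/2)
  have hs : Real.sqrt (Real.pi / (1/2)) = Real.sqrt (2 * Real.pi) := by
    norm_num [mul_comm]
  have h2 : ∫ z : ℝ, gauss z = (∫ x : ℝ, Real.exp (-(1/2) * x ^ 2)) / Real.sqrt (2 * Real.pi) := by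
    rw [← integral_div]
    congr 1; funext z; simp [gauss]; ring_nf
  rw [h2, h, hs, div_self]
  positivity


lemma gauss_cont : Continuous gauss := by unfold gauss; fun_prop

lemma cdf_eq (z : ℝ) : stdNormalCdf z = ∫ x in Iic z, gauss x := rfl

lemma cdf_zero : stdNormalCdf 0 = 1/2 := by
  have hsym : (∫ x in Iic (0:ℝ), gauss x) = ∫ x in Ioi (0:ℝ), gauss x := by
    have := integral_comp_neg_Iic (0:ℝ) gauss
    simp only [neg_zero] at this
    rw [← this]
    congr 1; funext x; simp [gauss]
  have hadd := intervalIntegral.integral_Iic_add_Ioi (b := (0:ℝ)) gauss_integrable.integrableOn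
    gauss_integrable.integrableOn
  rw [gauss_total, ← hsym] at hadd
  rw [cdf_eq]; linarith

lemma hasDerivAt_cdf (z : ℝ) : HasDerivAt stdNormalCdf (gauss z) z := by
  have key : stdNormalCdf = fun w => stdNormalCdf 0 + ∫ u in (0:ℝ)..w, gauss u := by
    funext w
    rw [cdf_eq, cdf_eq, ← intervalIntegral.integral_Iic_sub_Iic gauss_integrable.integrableOn
      gauss_integrable.integrableOn]
    ring
  rw [key]
  exact (intervalIntegral.integral_hasDerivAt_right
    (gauss_integrable.intervalIntegrable)
    gauss_cont.stronglyMeasurable.stronglyMeasurableAtFilter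
    gauss_cont.continuousAt).const_add _


lemma hasDerivAt_psi (z : ℝ) : HasDerivAt psi (2 * stdNormalCdf z - 1) z := by
  have h1 : HasDerivAt (fun w : ℝ => w * (2 * stdNormalCdf w - 1))
      (1 * (2 * stdNormalCdf z - 1) + z * (2 * gauss z)) z :=
    (hasDerivAt_id z).mul (((hasDerivAt_cdf z).const_mul 2).sub_const 1)
  have hinner : HasDerivAt (fun w : ℝ => -w ^ 2 / 2) (-z) z := by
    have := ((hasDerivAt_pow 2 z).neg).div_const 2
    refine this.congr_deriv ?_
    simp; ring
  have h2 : HasDerivAt (fun w : ℝ => (2 / Real.sqrt (2 * Real.pi)) * Real.exp (-w ^ 2 / 2))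
      ((2 / Real.sqrt (2 * Real.pi)) * (Real.exp (-z ^ 2 / 2) * (-z))) z :=
    (hinner.exp).const_mul _
  have hfun : psi = fun w => w * (2 * stdNormalCdf w - 1)
      + (2 / Real.sqrt (2 * Real.pi)) * Real.exp (-w ^ 2 / 2) := rfl
  rw [hfun]
  refine (h1.add h2).congr_deriv ?_
  have hne : Real.sqrt (2 * Real.pi) ≠ 0 := by positivity
  simp only [gauss]
  field_simp
  ring

lemma psi_key (z : ℝ) : psi z = z * (2 * stdNormalCdf z - 1) + 2 * gauss z := by
  simp only [psi, gauss]; ring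

lemma hasDerivAt_v_y (T t x : ℝ) (h : 0 < T - t) (y' : ℝ) :
    HasDerivAt (fun y'' => vFun T t x y'')
      (2 * stdNormalCdf ((y' - x) / Real.sqrt (T - t)) - 1) y' := by
  set s := Real.sqrt (T - t) with hs
  have hs0 : 0 < s := Real.sqrt_pos.mpr h
  have hinner : HasDerivAt (fun y'' : ℝ => (y'' - x) / s) (1 / s) y' := by
    simpa using ((hasDerivAt_id y').sub_const x).div_const s
  have hcomp := (hasDerivAt_psi ((y' - x) / s)).comp y' hinner
  have := (hcomp.const_mul s).const_add x
  have hfun : (fun y'' => vFun T t x y'')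
      = fun y'' => x + s * psi ((y'' - x) / s) := rfl
  rw [hfun]
  refine this.congr_deriv ?_
  field_simp

lemma hasDerivAt_v_x (T t y : ℝ) (h : 0 < T - t) (x' : ℝ) :
    HasDerivAt (fun x'' => vFun T t x'' y)
      (2 - 2 * stdNormalCdf ((y - x') / Real.sqrt (T - t))) x' := by
  set s := Real.sqrt (T - t) with hs
  have hs0 : 0 < s := Real.sqrt_pos.mpr h
  have hinner : HasDerivAt (fun x'' : ℝ => (y - x'') / s) (-(1 / s)) x' := by
    have : HasDerivAt (fun x'' : ℝ => y - x'') (-1) x' := by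
      simpa using ((hasDerivAt_id x').const_sub y)
    have h2 := this.div_const s
    refine h2.congr_deriv ?_
    ring
  have hcomp := (hasDerivAt_psi ((y - x') / s)).comp x' hinner
  have := (hasDerivAt_id x').add (hcomp.const_mul s)
  have hfun : (fun x'' => vFun T t x'' y)
      = fun x'' => x'' + s * psi ((y - x'') / s) := rfl
  rw [hfun]
  refine this.congr_deriv ?_
  field_simp
  ring

lemma hasDerivAt_v_t (T t x y : ℝ) (h : 0 < T - t) :
    HasDerivAt (fun t' => vFun T t' x y)
      (-(gauss ((y - x) / Real.sqrt (T - t))) / Real.sqrt (T - t)) t := by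
  set s := Real.sqrt (T - t) with hs
  have hs0 : 0 < s := Real.sqrt_pos.mpr h
  have hTt : HasDerivAt (fun t' : ℝ => T - t') (-1) t := by
    simpa using ((hasDerivAt_id t).const_sub T)
  have hS : HasDerivAt (fun t' => Real.sqrt (T - t')) (1 / (2 * s) * (-1)) t :=
    (Real.hasDerivAt_sqrt h.ne').comp t hTt
  have hinv : HasDerivAt (fun t' => (y - x) / Real.sqrt (T - t'))
      ((0 * s - (y - x) * (1 / (2 * s) * (-1))) / s ^ 2) t :=
    (hasDerivAt_const t (y - x)).div hS hs0.ne'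
  have hcomp := (hasDerivAt_psi ((y - x) / s)).comp t hinv
  have hfinal := (hS.mul hcomp).const_add x
  have hfun : (fun t' => vFun T t' x y)
      = fun t' => x + Real.sqrt (T - t') * psi ((y - x) / Real.sqrt (T - t')) := rfl
  rw [hfun]
  refine hfinal.congr_deriv ?_
  simp only [Function.comp_apply, ← hs]
  rw [psi_key]
  field_simp
  ring


/-- on {t < T, x < y}, v satisfies the heat equation
∂_t v + (1/2) ∂²_{xx} v = 0, and ∂_y v(t,x,y) → 0 as y ↓ x. -/
theorem stmt6 (T t x y : ℝ) (htT : t < T) (hxy : x < y) :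
    deriv (fun t' => vFun T t' x y) t
        + (1 / 2) * deriv (fun x' => deriv (fun x'' => vFun T t x'' y) x') x = 0 ∧
    Filter.Tendsto (fun y' => deriv (fun y'' => vFun T t x y'') y')
      (nhdsWithin x (Set.Ioi x)) (nhds 0) := by
  have h : 0 < T - t := sub_pos.mpr htT
  set s := Real.sqrt (T - t) with hs
  have hs0 : 0 < s := Real.sqrt_pos.mpr h
  have cdf_cont : Continuous stdNormalCdf :=
    continuous_iff_continuousAt.mpr fun z => (hasDerivAt_cdf z).continuousAt
  constructor
  · have hxfun : (fun x' => deriv (fun x'' => vFun T t x'' y) x')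
        = fun x' => 2 - 2 * stdNormalCdf ((y - x') / s) :=
      funext fun x' => (hasDerivAt_v_x T t y h x').deriv
    have hinner : HasDerivAt (fun x' : ℝ => (y - x') / s) (-(1 / s)) x := by
      have h1 : HasDerivAt (fun x' : ℝ => y - x') (-1) x := by
        simpa using ((hasDerivAt_id x).const_sub y)
      have h2 := h1.div_const s
      refine h2.congr_deriv ?_; ring
    have h2 : HasDerivAt (fun x' => 2 - 2 * stdNormalCdf ((y - x') / s))
        (2 - 2 * (gauss ((y - x) / s) * -(1 / s)) - 2) x := by
      have := (((hasDerivAt_cdf ((y - x) / s)).comp x hinner).const_mul 2).const_sub 2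
      refine this.congr_deriv ?_; ring
    rw [hxfun, (hasDerivAt_v_t T t x y h).deriv, h2.deriv]
    simp only [← hs]
    field_simp
    ring
  · have hyfun : (fun y' => deriv (fun y'' => vFun T t x y'') y')
        = fun y' => 2 * stdNormalCdf ((y' - x) / s) - 1 :=
      funext fun y' => (hasDerivAt_v_y T t x h y').deriv
    rw [hyfun]
    have hc : Continuous (fun y' : ℝ => 2 * stdNormalCdf ((y' - x) / s) - 1) := by
      fun_prop
    have hval : 2 * stdNormalCdf (0:ℝ) - 1 = 0 := by
      rw [cdf_zero]; norm_num
    have htend := (hc.continuousAt (x := x)).tendsto.mono_left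
      (nhdsWithin_le_nhds (s := Set.Ioi x))
    simpa [hval] using htend
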